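/- arXiv:2107.05913 — 2 statements merged into one kernel-verified Lean document; each statement's English description precedes it below -/
import Mathlib

section
/- Let Y, Ŷ, h(X) be {-1,+1}-valued random variables such that Ŷ is conditionally independent of X (and hence of h(X)) given Y, with symmetric noise rate P(Ŷ ≠ Y | Y = y) = e for both y, where e < 1/2. Then P(h(X) ≠ Ŷ) = (1 − 2e)·P(h(X) ≠ Y) + e. Consequently, minimizing P(h(X) ≠ Ŷ) over classifiers h is equivalent to minimizing P(h(X) ≠ Y). -/
open MeasureTheory

/-- Lemma 2: with symmetric instance-independent noise rate `e < 1/2` and `Ŷ`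
conditionally independent of `h(X)` given `Y`,
`P(h(X) ≠ Ŷ) = (1 − 2e)·P(h(X) ≠ Y) + e`. -/
theorem stmt0 {Ω : Type*} [MeasurableSpace Ω] (μ : Measure Ω) [IsProbabilityMeasure μ]
    (Y Yh hX : Ω → ℤ) (e : ℝ)
    (hYm : Measurable Y) (hYhm : Measurable Yh) (hhXm : Measurable hX)
    (hYr : ∀ ω, Y ω = 1 ∨ Y ω = -1)
    (hYhr : ∀ ω, Yh ω = 1 ∨ Yh ω = -1)
    (hhXr : ∀ ω, hX ω = 1 ∨ hX ω = -1)
    (he : e < 1/2)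
    (hnoise : ∀ y : ℤ, y = 1 ∨ y = -1 →
      (μ ({ω | Yh ω ≠ Y ω} ∩ {ω | Y ω = y})).toReal = e * (μ {ω | Y ω = y}).toReal)
    (hcondind : ∀ (s t : Set ℤ) (y : ℤ),
      (μ ({ω | Yh ω ∈ s} ∩ {ω | hX ω ∈ t} ∩ {ω | Y ω = y})).toReal
          * (μ {ω | Y ω = y}).toReal
        = (μ ({ω | Yh ω ∈ s} ∩ {ω | Y ω = y})).toReal
          * (μ ({ω | hX ω ∈ t} ∩ {ω | Y ω = y})).toReal) :
    (μ {ω | hX ω ≠ Yh ω}).toReal = (1 - 2*e) * (μ {ω | hX ω ≠ Y ω}).toReal + e := by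
  have htop : ∀ s : Set Ω, μ s ≠ ⊤ := fun s => measure_ne_top μ s
  have tadd : ∀ {s t u : Set Ω}, MeasurableSet t → Disjoint s t → u = s ∪ t →
      (μ u).toReal = (μ s).toReal + (μ t).toReal := by
    intro s t u ht hd hu
    rw [hu, measure_union hd ht, ENNReal.toReal_add (htop s) (htop t)]
  have mY : ∀ y : ℤ, MeasurableSet {ω | Y ω = y} :=
    fun y => hYm (measurableSet_singleton y)
  have mYh : ∀ y : ℤ, MeasurableSet {ω | Yh ω = y} :=
    fun y => hYhm (measurableSet_singleton y)
  have mhX : ∀ y : ℤ, MeasurableSet {ω | hX ω = y} :=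
    fun y => hhXm (measurableSet_singleton y)
  have key : ∀ y : ℤ, (y = 1 ∨ y = -1) →
      (μ ({ω | hX ω ≠ Yh ω} ∩ {ω | Y ω = y})).toReal
        = (1 - 2*e) * (μ ({ω | hX ω ≠ Y ω} ∩ {ω | Y ω = y})).toReal
          + e * (μ {ω | Y ω = y}).toReal := by
    intro y hy
    set p := (μ {ω | Y ω = y}).toReal with hpdef
    set A := (μ ({ω | Yh ω = -y} ∩ {ω | hX ω = y} ∩ {ω | Y ω = y})).toReal with hAdef
    set B := (μ ({ω | Yh ω = y} ∩ {ω | hX ω = -y} ∩ {ω | Y ω = y})).toReal with hBdef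
    set a := (μ ({ω | hX ω = -y} ∩ {ω | Y ω = y})).toReal with hadef
    set b := (μ ({ω | hX ω = y} ∩ {ω | Y ω = y})).toReal with hbdef
    set c := (μ ({ω | Yh ω = -y} ∩ {ω | Y ω = y})).toReal with hcdef
    set d := (μ ({ω | Yh ω = y} ∩ {ω | Y ω = y})).toReal with hddef
    -- a equals the error-within-y quantity
    have hset_a : {ω | hX ω ≠ Y ω} ∩ {ω | Y ω = y} = {ω | hX ω = -y} ∩ {ω | Y ω = y} := by
      ext ω
      simp only [Set.mem_inter_iff, Set.mem_setOf_eq]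
      rcases hy with rfl | rfl <;> rcases hhXr ω with h2 | h2 <;>
        rcases hYr ω with h3 | h3 <;> omega
    -- noise: c = e * p
    have hset_c : {ω | Yh ω ≠ Y ω} ∩ {ω | Y ω = y} = {ω | Yh ω = -y} ∩ {ω | Y ω = y} := by
      ext ω
      simp only [Set.mem_inter_iff, Set.mem_setOf_eq]
      rcases hy with rfl | rfl <;> rcases hYhr ω with h1 | h1 <;>
        rcases hYr ω with h3 | h3 <;> omega
    have hc : c = e * p := by
      have := hnoise y hy
      rw [hset_c] at this
      exact this
    -- decomposition of {Y = y} by hX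
    have hpab : p = b + a := by
      refine tadd ((mhX (-y)).inter (mY y)) ?_ ?_
      · refine Set.disjoint_left.2 ?_
        rintro ω ⟨h1, h2⟩ ⟨h3, h4⟩
        simp only [Set.mem_setOf_eq] at h1 h2 h3 h4
        rcases hy with rfl | rfl <;> omega
      · ext ω
        simp only [Set.mem_union, Set.mem_inter_iff, Set.mem_setOf_eq]
        rcases hy with rfl | rfl <;> rcases hhXr ω with h2 | h2 <;>
          rcases hYr ω with h3 | h3 <;> omega
    -- decomposition of {Y = y} by Yh
    have hpcd : p = d + c := by
      refine tadd ((mYh (-y)).inter (mY y)) ?_ ?_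
      · refine Set.disjoint_left.2 ?_
        rintro ω ⟨h1, h2⟩ ⟨h3, h4⟩
        simp only [Set.mem_setOf_eq] at h1 h2 h3 h4
        rcases hy with rfl | rfl <;> omega
      · ext ω
        simp only [Set.mem_union, Set.mem_inter_iff, Set.mem_setOf_eq]
        rcases hy with rfl | rfl <;> rcases hYhr ω with h1 | h1 <;>
          rcases hYr ω with h3 | h3 <;> omega
    -- conditional independence
    have h1 := hcondind {-y} {y} y
    have h2 := hcondind {y} {-y} y
    simp only [Set.mem_singleton_iff] at h1 h2
    have hA : A * p = c * b := h1
    have hB : B * p = d * a := h2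
    -- decomposition of the disagreement event
    have hABsum : (μ ({ω | hX ω ≠ Yh ω} ∩ {ω | Y ω = y})).toReal = A + B := by
      refine tadd (((mYh y).inter (mhX (-y))).inter (mY y)) ?_ ?_
      · refine Set.disjoint_left.2 ?_
        rintro ω ⟨⟨h1', h2'⟩, h3'⟩ ⟨⟨h4', h5'⟩, h6'⟩
        simp only [Set.mem_setOf_eq] at h1' h2' h3' h4' h5' h6'
        rcases hy with rfl | rfl <;> omega
      · ext ω
        simp only [Set.mem_union, Set.mem_inter_iff, Set.mem_setOf_eq]
        rcases hy with rfl | rfl <;> rcases hYhr ω with h1' | h1' <;>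
          rcases hhXr ω with h2' | h2' <;> rcases hYr ω with h3' | h3' <;> omega
    rw [hABsum, hset_a]
    show A + B = (1 - 2*e) * a + e * p
    by_cases hp0 : p = 0
    · have hμ0 : μ {ω | Y ω = y} = 0 := by
        have := (ENNReal.toReal_eq_zero_iff _).1 hp0
        rcases this with h | h
        · exact h
        · exact absurd h (htop _)
      have z : ∀ s : Set Ω, s ⊆ {ω | Y ω = y} → (μ s).toReal = 0 := by
        intro s hs
        rw [measure_mono_null hs hμ0, ENNReal.toReal_zero]
      have hA0 : A = 0 := z _ (fun ω h => h.2)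
      have hB0 : B = 0 := z _ (fun ω h => h.2)
      have ha0 : a = 0 := z _ (fun ω h => h.2)
      rw [hA0, hB0, ha0, hp0]; ring
    · have hd : d = (1 - e) * p := by
        rw [hc] at hpcd; linarith
      have hmain : (A + B) * p = ((1 - 2*e) * a + e * p) * p := by
        have hb : b = p - a := by linarith
        rw [add_mul, hA, hB, hc, hd, hb]; ring
      exact mul_right_cancel₀ hp0 hmain
  -- now sum over y = 1 and y = -1
  have split : ∀ E : Set Ω, MeasurableSet E →
      (μ E).toReal = (μ (E ∩ {ω | Y ω = 1})).toReal + (μ (E ∩ {ω | Y ω = -1})).toReal := by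
    intro E hE
    refine tadd (hE.inter (mY (-1))) ?_ ?_
    · refine Set.disjoint_left.2 ?_
      rintro ω ⟨h1, h2⟩ ⟨h3, h4⟩
      simp only [Set.mem_setOf_eq] at h2 h4
      omega
    · ext ω
      simp only [Set.mem_union, Set.mem_inter_iff, Set.mem_setOf_eq]
      rcases hYr ω with h | h <;> simp [h]
  have mNe1 : MeasurableSet {ω | hX ω ≠ Yh ω} := by
    have : {ω | hX ω ≠ Yh ω} = ⋃ z : ℤ, ({ω | hX ω = z} ∩ {ω | Yh ω = z})ᶜ ∩
        {ω | hX ω = z} := by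
      ext ω
      simp only [Set.mem_iUnion, Set.mem_inter_iff, Set.mem_compl_iff, Set.mem_setOf_eq]
      constructor
      · intro h; exact ⟨hX ω, by tauto, rfl⟩
      · rintro ⟨z, h1, h2⟩ h
        exact h1 ⟨h2, by rw [← h, h2]⟩
    rw [this]
    exact MeasurableSet.iUnion fun z => (((mhX z).inter (mYh z)).compl).inter (mhX z)
  have mNe2 : MeasurableSet {ω | hX ω ≠ Y ω} := by
    have : {ω | hX ω ≠ Y ω} = ⋃ z : ℤ, ({ω | hX ω = z} ∩ {ω | Y ω = z})ᶜ ∩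
        {ω | hX ω = z} := by
      ext ω
      simp only [Set.mem_iUnion, Set.mem_inter_iff, Set.mem_compl_iff, Set.mem_setOf_eq]
      constructor
      · intro h; exact ⟨hX ω, by tauto, rfl⟩
      · rintro ⟨z, h1, h2⟩ h
        exact h1 ⟨h2, by rw [← h, h2]⟩
    rw [this]
    exact MeasurableSet.iUnion fun z => (((mhX z).inter (mY z)).compl).inter (mhX z)
  have hpsum : (μ {ω | Y ω = 1}).toReal + (μ {ω | Y ω = -1}).toReal = 1 := by
    have : (μ (Set.univ : Set Ω)).toReal
        = (μ {ω | Y ω = 1}).toReal + (μ {ω | Y ω = -1}).toReal := by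
      refine tadd (mY (-1)) ?_ ?_
      · refine Set.disjoint_left.2 ?_
        intro ω h1 h2
        simp only [Set.mem_setOf_eq] at h1 h2
        omega
      · ext ω
        simp only [Set.mem_union, Set.mem_setOf_eq, Set.mem_univ, true_iff]
        exact hYr ω
    rw [measure_univ, ENNReal.toReal_one] at this
    exact this.symm
  rw [split _ mNe1, split _ mNe2, key 1 (Or.inl rfl), key (-1) (Or.inr rfl)]
  nlinarith [hpsum]
end

section
/- Let ℓ be a loss with values in [0, ∞) and let Ỹ be a noisy version of y ∈ {-1,+1} with P(Ỹ=-y|Y=y)=e_{sgn(y)}, where e₊+e₋ < 1. Define ℓ⋄(t, ỹ) = (1 − e_{−sgn(ỹ)})·ℓ(t, ỹ) − e_{sgn(ỹ)}·ℓ(t, −ỹ). Then for every prediction value t and true label y: (1/(1 − e₊ − e₋))·E_{Ỹ|Y=y}[ℓ⋄(t, Ỹ)] = ℓ(t, y). -/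
/-- Unbiasedness of the noise-corrected loss (Natarajan et al.):
`(1/(1 − e₊ − e₋))·E_{Ỹ|Y=y}[ℓ⋄(t, Ỹ)] = ℓ(t, y)`. -/
theorem stmt12 {α : Type*} (ℓ : α → ℤ → ℝ) (eP eM : ℝ) (t : α) (y : ℤ)
    (hy : y = 1 ∨ y = -1)
    (hnn : ∀ (t : α) (y : ℤ), 0 ≤ ℓ t y)
    (hsum : eP + eM < 1) :
    (1 / (1 - eP - eM)) *
      ((1 - (if y = 1 then eP else eM)) *
          ((1 - (if y = 1 then eM else eP)) * ℓ t y
            - (if y = 1 then eP else eM) * ℓ t (-y))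
        + (if y = 1 then eP else eM) *
          ((1 - (if y = 1 then eP else eM)) * ℓ t (-y)
            - (if y = 1 then eM else eP) * ℓ t y))
    = ℓ t y := by
  have h : 1 - eP - eM ≠ 0 := by linarith
  rcases hy with rfl | rfl <;> simp <;> field_simp <;> ring
end
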